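/- Let n ≥ 1 and let h: ℝⁿ → ℝ be continuously differentiable with ∇h(x) ≠ 0 for every x ∈ ℝⁿ. Assume property H3: for all x_a, x_b ∈ ℝⁿ with h(x_a) = h(x_b) and all s ∈ [0, 1], h(s·x_a + (1 − s)·x_b) = h(x_a). Then for every real Q > 0 and all χ, x ∈ ℝⁿ with h(χ) ≠ h(x), one has ⟨∇h(χ), χ − x⟩·Q·(h(χ) − h(x)) > 0. -/

import Mathlib

open Filter Set Topology

/-- Key lemma: under H3, if `h x < h χ` then the directional derivative of `h` at `χ`
in the direction `χ - x` is strictly positive. -/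
lemma stmt_16_key {n : ℕ} (h : (Fin n → ℝ) → ℝ) (hh : ContDiff ℝ 1 h)
    (hH3 : ∀ xa xb : Fin n → ℝ, h xa = h xb →
      ∀ s ∈ Set.Icc (0 : ℝ) 1, h (s • xa + (1 - s) • xb) = h xa)
    (χ x : Fin n → ℝ) (hφ : fderiv ℝ h χ ≠ 0) (hlt : h x < h χ) :
    0 < fderiv ℝ h χ (χ - x) := by
  set φ := fderiv ℝ h χ with hφdef
  have hdiff : Differentiable ℝ h := hh.differentiable one_ne_zero
  -- obtain a direction `v` with `φ v > 0`
  obtain ⟨w, hw⟩ : ∃ w, φ w ≠ 0 := by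
    by_contra hcon
    push_neg at hcon
    exact hφ (ContinuousLinearMap.ext fun w => hcon w)
  obtain ⟨v, hv⟩ : ∃ v, 0 < φ v := by
    rcases hw.lt_or_gt with h1 | h1
    · exact ⟨-w, by simpa using h1⟩
    · exact ⟨w, h1⟩
  -- the function `b ↦ h (χ + b • v)` has derivative `φ v` at `0`
  have hβ : HasDerivAt (fun b : ℝ => h (χ + b • v)) (φ v) 0 := by
    have hcurve : HasDerivAt (fun b : ℝ => χ + b • v) v 0 := by
      simpa using ((hasDerivAt_id (0 : ℝ)).smul_const v).const_add χ
    have hf : HasFDerivAt h φ (χ + (0 : ℝ) • v) := by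
      simpa using (hdiff χ).hasFDerivAt
    exact hf.comp_hasDerivAt 0 hcurve
  -- hence there is `b > 0` with `h (χ + b • v) > h χ`
  have hslope : Tendsto (slope (fun b : ℝ => h (χ + b • v)) 0) (𝓝[>] 0) (𝓝 (φ v)) :=
    (hasDerivAt_iff_tendsto_slope.1 hβ).mono_left
      (nhdsWithin_mono _ (fun y hy => ne_of_gt hy))
  have hev : ∀ᶠ b in 𝓝[>] (0 : ℝ),
      0 < slope (fun b : ℝ => h (χ + b • v)) 0 b := hslope.eventually (lt_mem_nhds hv)
  obtain ⟨b, hbs, hb0⟩ := (hev.and self_mem_nhdsWithin).exists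
  have hbgt : h χ < h (χ + b • v) := by
    have := hbs
    rw [slope_def_field] at this
    have h2 : 0 < (h (χ + b • v) - h (χ + (0 : ℝ) • v)) / (b - 0) := this
    rw [sub_zero] at h2
    have h3 : 0 < h (χ + b • v) - h (χ + (0 : ℝ) • v) :=
      (div_pos_iff.1 h2).resolve_right (fun hc => absurd hb0 (not_lt.2 hc.2.le)) |>.1
    simpa using sub_pos.1 h3
  -- by IVT find `s ∈ [0,1]` with `h ((1-s) • x + s • (χ + b • v)) = h χ`
  set k : ℝ → ℝ := fun s => h ((1 - s) • x + s • (χ + b • v)) with hk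
  have hkc : Continuous k := by
    apply hh.continuous.comp
    fun_prop
  have hk0 : k 0 = h x := by simp [hk]
  have hk1 : k 1 = h (χ + b • v) := by simp [hk]
  have hmem : h χ ∈ Set.Icc (k 0) (k 1) := by
    rw [hk0, hk1]; exact ⟨hlt.le, hbgt.le⟩
  obtain ⟨s, hs01, hks⟩ := intermediate_value_Icc zero_le_one hkc.continuousOn hmem
  have hs0 : s ≠ 0 := by
    intro hs; rw [hs, hk0] at hks; exact absurd hks.symm hlt.ne'
  have hs1 : s ≠ 1 := by
    intro hs; rw [hs, hk1] at hks; exact absurd hks hbgt.ne'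
  have hspos : 0 < s := lt_of_le_of_ne hs01.1 (Ne.symm hs0)
  have hslt1 : s < 1 := lt_of_le_of_ne hs01.2 hs1
  set P : Fin n → ℝ := (1 - s) • x + s • (χ + b • v) with hP
  have hPval : h P = h χ := hks
  -- by H3, `h` is constant on the segment from `χ` to `P`, so `φ (P - χ) = 0`
  have hconst : ∀ t ∈ Set.Icc (0 : ℝ) 1, h (χ + t • (P - χ)) = h χ := by
    intro t ht
    have := hH3 P χ hPval t ht
    have heq : t • P + (1 - t) • χ = χ + t • (P - χ) := by
      simp [smul_sub, sub_smul]; abel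
    rw [heq] at this
    rw [this, hPval]
  have hγ : HasDerivAt (fun t : ℝ => h (χ + t • (P - χ))) (φ (P - χ)) 0 := by
    have hcurve : HasDerivAt (fun t : ℝ => χ + t • (P - χ)) (P - χ) 0 := by
      simpa using ((hasDerivAt_id (0 : ℝ)).smul_const (P - χ)).const_add χ
    have hf : HasFDerivAt h φ (χ + (0 : ℝ) • (P - χ)) := by
      simpa using (hdiff χ).hasFDerivAt
    exact hf.comp_hasDerivAt 0 hcurve
  have hφP : φ (P - χ) = 0 := by
    have hsl : Tendsto (slope (fun t : ℝ => h (χ + t • (P - χ))) 0) (𝓝[>] 0)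
        (𝓝 (φ (P - χ))) :=
      (hasDerivAt_iff_tendsto_slope.1 hγ).mono_left
        (nhdsWithin_mono _ (fun y hy => ne_of_gt hy))
    have hIoc : Set.Ioc (0 : ℝ) 1 ∈ 𝓝[>] (0 : ℝ) :=
      Ioc_mem_nhdsGT_of_mem ⟨le_refl 0, zero_lt_one⟩
    have hzero : slope (fun t : ℝ => h (χ + t • (P - χ))) 0 =ᶠ[𝓝[>] (0 : ℝ)]
        fun _ => (0 : ℝ) := by
      filter_upwards [hIoc] with t ht
      rw [slope_def_field]
      have h1 : h (χ + t • (P - χ)) = h χ := hconst t ⟨ht.1.le, ht.2⟩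
      have h2 : h (χ + (0 : ℝ) • (P - χ)) = h χ := by simp
      rw [h1, h2, sub_self, zero_div]
    have : Tendsto (fun _ : ℝ => (0 : ℝ)) (𝓝[>] (0 : ℝ)) (𝓝 (φ (P - χ))) :=
      hsl.congr' hzero
    exact tendsto_nhds_unique this tendsto_const_nhds
  -- compute `φ (P - χ)` and conclude
  have hPχ : P - χ = (1 - s) • (x - χ) + (s * b) • v := by
    rw [hP]
    simp [smul_sub, sub_smul, smul_smul, smul_add]
    abel
  have hcomp : (1 - s) * φ (x - χ) + (s * b) * φ v = 0 := by
    rw [← hφP, hPχ]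
    simp [map_add, map_smul]
  have hneg : φ (x - χ) < 0 := by
    by_contra hge
    push_neg at hge
    have h1 : 0 < (1 - s) * φ (x - χ) + (s * b) * φ v := by
      have h2 : 0 ≤ (1 - s) * φ (x - χ) := mul_nonneg (by linarith) hge
      have h3 : 0 < (s * b) * φ v := mul_pos (mul_pos hspos hb0) hv
      linarith
    rw [hcomp] at h1; exact lt_irrefl 0 h1
  have : φ (χ - x) = -φ (x - χ) := by rw [← map_neg, neg_sub]
  rw [this]; linarith

/-- If `h : ℝⁿ → ℝ` is continuously differentiable with nowhere-vanishing gradient and its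
level sets are segment-convex (property H3), then for every `Q > 0` and all `χ, x` with
`h(χ) ≠ h(x)`, one has `⟨∇h(χ), χ − x⟩·Q·(h(χ) − h(x)) > 0`. -/
theorem stmt_16 {n : ℕ} (hn : 1 ≤ n)
    (h : (Fin n → ℝ) → ℝ) (hh : ContDiff ℝ 1 h)
    (hgrad : ∀ x : Fin n → ℝ, fderiv ℝ h x ≠ 0)
    (hH3 : ∀ xa xb : Fin n → ℝ, h xa = h xb →
      ∀ s ∈ Set.Icc (0 : ℝ) 1, h (s • xa + (1 - s) • xb) = h xa) :
    ∀ Q : ℝ, 0 < Q → ∀ χ x : Fin n → ℝ, h χ ≠ h x →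
      0 < fderiv ℝ h χ (χ - x) * Q * (h χ - h x) := by
  intro Q hQ χ x hne
  rcases hne.lt_or_gt with hlt | hlt
  · -- h χ < h x : apply the key lemma to -h
    have hneg : ContDiff ℝ 1 (fun y => -h y) := hh.neg
    have hfd : ∀ y, fderiv ℝ (fun z => -h z) y = -fderiv ℝ h y := fun y => fderiv_fun_neg
    have hgrad' : fderiv ℝ (fun z => -h z) χ ≠ 0 := by
      rw [hfd]; exact neg_ne_zero.2 (hgrad χ)
    have hH3' : ∀ xa xb : Fin n → ℝ, (fun y => -h y) xa = (fun y => -h y) xb →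
        ∀ s ∈ Set.Icc (0 : ℝ) 1, (fun y => -h y) (s • xa + (1 - s) • xb)
          = (fun y => -h y) xa := by
      intro xa xb hab s hs
      simp only [neg_inj] at hab ⊢
      exact hH3 xa xb hab s hs
    have hlt' : (fun y => -h y) x < (fun y => -h y) χ := by simpa using hlt
    have hkey := stmt_16_key (fun y => -h y) hneg hH3' χ x hgrad' hlt'
    rw [hfd] at hkey
    simp only [ContinuousLinearMap.neg_apply] at hkey
    have h1 : fderiv ℝ h χ (χ - x) < 0 := by linarith
    have h2 : h χ - h x < 0 := sub_neg.2 hlt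
    have h3 : fderiv ℝ h χ (χ - x) * Q < 0 := mul_neg_of_neg_of_pos h1 hQ
    exact mul_pos_of_neg_of_neg h3 h2
  · -- h x < h χ
    have hkey := stmt_16_key h hh hH3 χ x (hgrad χ) hlt
    have h2 : 0 < h χ - h x := sub_pos.2 hlt
    exact mul_pos (mul_pos hkey hQ) h2
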